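/- Let T be a bounded operator on a complex Hilbert space H with polar decomposition T = U|T|, where U is a partial isometry with ‖U‖ ≤ 1. Then ω(T) ≤ (1/2)(‖T‖ + ‖T‖^{1/2}·ω(U|T|^{1/2})) ≤ ‖T‖. -/

import Mathlib

open scoped InnerProductSpace
set_option synthInstance.maxHeartbeats 1000000
set_option maxHeartbeats 1000000

noncomputable def numRadius {H : Type*} [NormedAddCommGroup H]
    [InnerProductSpace ℂ H] (T : H →L[ℂ] H) : ℝ :=
  ⨆ x : {x : H // ‖x‖ = 1}, ‖⟪T x, (x : H)⟫_ℂ‖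

section aux

variable {H : Type*} [NormedAddCommGroup H] [InnerProductSpace ℂ H]

lemma inner_le_numRadius (A : H →L[ℂ] H) {x : H} (hx : ‖x‖ = 1) :
    ‖⟪A x, x⟫_ℂ‖ ≤ numRadius A := by
  have hbdd : BddAbove (Set.range fun x : {x : H // ‖x‖ = 1} => ‖⟪A x, (x : H)⟫_ℂ‖) := by
    refine ⟨‖A‖, ?_⟩
    rintro r ⟨⟨y, hy⟩, rfl⟩
    calc ‖⟪A y, y⟫_ℂ‖ ≤ ‖A y‖ * ‖y‖ := norm_inner_le_norm _ _
      _ ≤ (‖A‖ * ‖y‖) * ‖y‖ := by gcongr; exact A.le_opNorm y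
      _ = ‖A‖ := by rw [hy]; ring
  exact le_ciSup hbdd (⟨x, hx⟩ : {x : H // ‖x‖ = 1})

lemma numRadius_le (A : H →L[ℂ] H) {c : ℝ} (hc : 0 ≤ c)
    (h : ∀ x : H, ‖x‖ = 1 → ‖⟪A x, x⟫_ℂ‖ ≤ c) : numRadius A ≤ c :=
  Real.iSup_le (fun x => h x x.2) hc

lemma numRadius_nonneg (A : H →L[ℂ] H) : 0 ≤ numRadius A :=
  Real.iSup_nonneg fun _ => norm_nonneg _

lemma numRadius_le_norm (A : H →L[ℂ] H) : numRadius A ≤ ‖A‖ := by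
  refine numRadius_le A (norm_nonneg A) fun x hx => ?_
  calc ‖⟪A x, x⟫_ℂ‖ ≤ ‖A x‖ * ‖x‖ := norm_inner_le_norm _ _
    _ ≤ (‖A‖ * ‖x‖) * ‖x‖ := by gcongr; exact A.le_opNorm x
    _ = ‖A‖ := by rw [hx]; ring

end aux

theorem numerical_radius_polar {H : Type*} [NormedAddCommGroup H]
    [InnerProductSpace ℂ H] [CompleteSpace H] (T U : H →L[ℂ] H)
    (hT : T = U * CFC.sqrt (ContinuousLinearMap.adjoint T * T))
    (hU : ‖U‖ ≤ 1) :
    numRadius T ≤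
      (1 / 2) * (‖T‖ + Real.sqrt ‖T‖ *
        numRadius (U * CFC.sqrt (CFC.sqrt (ContinuousLinearMap.adjoint T * T)))) ∧
    (1 / 2) * (‖T‖ + Real.sqrt ‖T‖ *
        numRadius (U * CFC.sqrt (CFC.sqrt (ContinuousLinearMap.adjoint T * T)))) ≤ ‖T‖ := by
  set R : H →L[ℂ] H := CFC.sqrt (ContinuousLinearMap.adjoint T * T) with hRdef
  set S : H →L[ℂ] H := CFC.sqrt R with hSdef
  set A : H →L[ℂ] H := U * S with hAdef
  set m : ℝ := Real.sqrt ‖T‖ with hmdef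
  have hm0 : 0 ≤ m := Real.sqrt_nonneg _
  have hmm : m * m = ‖T‖ := Real.mul_self_sqrt (norm_nonneg T)
  have hTT : (0 : H →L[ℂ] H) ≤ ContinuousLinearMap.adjoint T * T := by
    rw [← ContinuousLinearMap.star_eq_adjoint]; exact star_mul_self_nonneg T
  have hR0 : (0 : H →L[ℂ] H) ≤ R := CFC.sqrt_nonneg _
  have hS0 : (0 : H →L[ℂ] H) ≤ S := CFC.sqrt_nonneg _
  have hRsa : IsSelfAdjoint R := .of_nonneg hR0
  have hSsa : IsSelfAdjoint S := .of_nonneg hS0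
  have hSS : S * S = R := CFC.sqrt_mul_sqrt_self R hR0
  have hRR : R * R = ContinuousLinearMap.adjoint T * T := CFC.sqrt_mul_sqrt_self _ hTT
  -- norms
  have hnR : ‖R‖ = ‖T‖ := by
    have h1 : ‖R‖ * ‖R‖ = ‖T‖ * ‖T‖ := by
      calc ‖R‖ * ‖R‖ = ‖star R * R‖ := (CStarRing.norm_star_mul_self).symm
        _ = ‖R * R‖ := by rw [hRsa.star_eq]
        _ = ‖star T * T‖ := by rw [hRR, ContinuousLinearMap.star_eq_adjoint]
        _ = ‖T‖ * ‖T‖ := CStarRing.norm_star_mul_self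
    calc ‖R‖ = Real.sqrt (‖R‖ * ‖R‖) := (Real.sqrt_mul_self (norm_nonneg R)).symm
      _ = Real.sqrt (‖T‖ * ‖T‖) := by rw [h1]
      _ = ‖T‖ := Real.sqrt_mul_self (norm_nonneg T)
  have hnS : ‖S‖ = m := by
    have h1 : ‖S‖ * ‖S‖ = ‖T‖ := by
      calc ‖S‖ * ‖S‖ = ‖star S * S‖ := (CStarRing.norm_star_mul_self).symm
        _ = ‖S * S‖ := by rw [hSsa.star_eq]
        _ = ‖T‖ := by rw [hSS, hnR]
    calc ‖S‖ = Real.sqrt (‖S‖ * ‖S‖) := (Real.sqrt_mul_self (norm_nonneg S)).symm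
      _ = m := by rw [h1]
  have hnA : ‖A‖ ≤ m := by
    calc ‖A‖ ≤ ‖U‖ * ‖S‖ := norm_mul_le U S
      _ ≤ 1 * m := by
        apply mul_le_mul hU (le_of_eq hnS) (norm_nonneg S) zero_le_one
      _ = m := one_mul m
  have hTA : T = A * S := by
    rw [hAdef, mul_assoc, hSS]; exact hT
  -- the square root of S
  set W : H →L[ℂ] H := CFC.sqrt S with hWdef
  have hW0 : (0 : H →L[ℂ] H) ≤ W := CFC.sqrt_nonneg _
  have hWsa : IsSelfAdjoint W := .of_nonneg hW0
  have hWW : W * W = S := CFC.sqrt_mul_sqrt_self S hS0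
  have hWadj : ContinuousLinearMap.adjoint W = W := hWsa.adjoint_eq
  have hSadj : ContinuousLinearMap.adjoint S = S := hSsa.adjoint_eq
  -- key pointwise estimate : ‖S x‖ ^ 2 ≤ m * re ⟪S x, x⟫
  have hkey : ∀ x : H, ‖S x‖ ^ 2 ≤ m * (⟪S x, x⟫_ℂ).re := by
    intro x
    set y : H := W x with hy
    have hyy : (⟪y, y⟫_ℂ).re = (⟪S x, x⟫_ℂ).re := by
      have : ⟪W x, W x⟫_ℂ = ⟪x, S x⟫_ℂ := by
        calc ⟪W x, W x⟫_ℂ = ⟪ContinuousLinearMap.adjoint W x, W x⟫_ℂ := by rw [hWadj]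
          _ = ⟪x, W (W x)⟫_ℂ := ContinuousLinearMap.adjoint_inner_left W _ _
          _ = ⟪x, S x⟫_ℂ := by rw [← hWW]; rfl
      rw [hy, this, ← inner_conj_symm x (S x), Complex.conj_re]
    have hSx : ‖S x‖ ^ 2 = (⟪S y, y⟫_ℂ).re := by
      have h1 : ⟪S (S x), x⟫_ℂ = ⟪S x, S x⟫_ℂ := by
        calc ⟪S (S x), x⟫_ℂ = ⟪ContinuousLinearMap.adjoint S (S x), x⟫_ℂ := by rw [hSadj]
          _ = ⟪S x, S x⟫_ℂ := ContinuousLinearMap.adjoint_inner_left S _ _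
      have h2 : S (S x) = W (S y) := by
        have : S * S = W * (S * W) := by rw [← hWW]; noncomm_ring
        calc S (S x) = (S * S) x := (ContinuousLinearMap.mul_apply S S x).symm
          _ = (W * (S * W)) x := by rw [this]
          _ = W (S y) := by simp [ContinuousLinearMap.mul_apply, hy]
      have h3 : ⟪W (S y), x⟫_ℂ = ⟪S y, y⟫_ℂ := by
        calc ⟪W (S y), x⟫_ℂ = ⟪ContinuousLinearMap.adjoint W (S y), x⟫_ℂ := by rw [hWadj]
          _ = ⟪S y, W x⟫_ℂ := ContinuousLinearMap.adjoint_inner_left W _ _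
          _ = ⟪S y, y⟫_ℂ := rfl
      have : ⟪S x, S x⟫_ℂ = ⟪S y, y⟫_ℂ := by rw [← h1, h2, h3]
      calc ‖S x‖ ^ 2 = (⟪S x, S x⟫_ℂ).re := (inner_self_eq_norm_sq (𝕜 := ℂ) (S x)).symm
        _ = (⟪S y, y⟫_ℂ).re := by rw [this]
    have hb : (⟪S y, y⟫_ℂ).re ≤ m * (⟪y, y⟫_ℂ).re := by
      have h4 : (⟪S y, y⟫_ℂ).re ≤ ‖S y‖ * ‖y‖ := by
        calc (⟪S y, y⟫_ℂ).re ≤ ‖⟪S y, y⟫_ℂ‖ := Complex.re_le_norm _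
          _ ≤ ‖S y‖ * ‖y‖ := norm_inner_le_norm _ _
      have h5 : ‖S y‖ * ‖y‖ ≤ m * ‖y‖ ^ 2 := by
        calc ‖S y‖ * ‖y‖ ≤ (‖S‖ * ‖y‖) * ‖y‖ := by gcongr; exact S.le_opNorm y
          _ = m * ‖y‖ ^ 2 := by rw [hnS]; ring
      have h6 : (⟪y, y⟫_ℂ).re = ‖y‖ ^ 2 := inner_self_eq_norm_sq (𝕜 := ℂ) y
      rw [h6]; exact h4.trans h5
    calc ‖S x‖ ^ 2 = (⟪S y, y⟫_ℂ).re := hSx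
      _ ≤ m * (⟪y, y⟫_ℂ).re := hb
      _ = m * (⟪S x, x⟫_ℂ).re := by rw [hyy]
  -- deviation bound
  have hdev : ∀ x : H, ‖x‖ = 1 → ‖S x - ((m / 2 : ℝ) : ℂ) • x‖ ≤ m / 2 := by
    intro x hx
    set c : ℂ := ((m / 2 : ℝ) : ℂ) with hc
    have hsq : ‖S x - c • x‖ ^ 2 ≤ (m / 2) ^ 2 := by
      have hexp := norm_sub_sq (𝕜 := ℂ) (S x) (c • x)
      simp only [RCLike.re_to_complex] at hexp
      have h1 : (⟪S x, c • x⟫_ℂ).re = (m / 2) * (⟪S x, x⟫_ℂ).re := by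
        rw [inner_smul_right]
        simp [hc]
      have h2 : ‖c • x‖ ^ 2 = (m / 2) ^ 2 := by
        rw [norm_smul, hx, mul_one, hc]
        simp [abs_of_nonneg hm0]
      rw [hexp, h1, h2]
      have := hkey x
      nlinarith [hkey x]
    have h7 : ‖S x - c • x‖ = Real.sqrt (‖S x - c • x‖ ^ 2) :=
      (Real.sqrt_sq (norm_nonneg _)).symm
    rw [h7]
    calc Real.sqrt (‖S x - c • x‖ ^ 2) ≤ Real.sqrt ((m / 2) ^ 2) := Real.sqrt_le_sqrt hsq
      _ = m / 2 := Real.sqrt_sq (by positivity)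
  -- main pointwise bound
  have hmain : ∀ x : H, ‖x‖ = 1 →
      ‖⟪T x, x⟫_ℂ‖ ≤ (1 / 2) * (‖T‖ + m * numRadius A) := by
    intro x hx
    set c : ℂ := ((m / 2 : ℝ) : ℂ) with hc
    set d : H := S x - c • x with hd
    have hTx : T x = c • A x + A d := by
      have h1 : T x = A (S x) := by rw [hTA, ContinuousLinearMap.mul_apply]
      have h2 : A d = A (S x) - c • A x := by
        rw [hd, map_sub, map_smul]
      rw [h1, h2]; abel
    have hsplit : ⟪T x, x⟫_ℂ = (starRingEnd ℂ) c * ⟪A x, x⟫_ℂ + ⟪A d, x⟫_ℂ := by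
      rw [hTx, inner_add_left, inner_smul_left]
    have hnc : ‖(starRingEnd ℂ) c‖ = m / 2 := by
      rw [hc, Complex.conj_ofReal, Complex.norm_real, Real.norm_eq_abs,
        abs_of_nonneg (by positivity : (0:ℝ) ≤ m / 2)]
    have hAd : ‖⟪A d, x⟫_ℂ‖ ≤ ‖T‖ / 2 := by
      calc ‖⟪A d, x⟫_ℂ‖ ≤ ‖A d‖ * ‖x‖ := norm_inner_le_norm _ _
        _ = ‖A d‖ := by rw [hx, mul_one]
        _ ≤ ‖A‖ * ‖d‖ := A.le_opNorm d
        _ ≤ m * (m / 2) := by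
          apply mul_le_mul hnA (hdev x hx) (norm_nonneg d) hm0
        _ = ‖T‖ / 2 := by rw [← hmm]; ring
    calc ‖⟪T x, x⟫_ℂ‖ = ‖(starRingEnd ℂ) c * ⟪A x, x⟫_ℂ + ⟪A d, x⟫_ℂ‖ := by rw [hsplit]
      _ ≤ ‖(starRingEnd ℂ) c * ⟪A x, x⟫_ℂ‖ + ‖⟪A d, x⟫_ℂ‖ := norm_add_le _ _
      _ = (m / 2) * ‖⟪A x, x⟫_ℂ‖ + ‖⟪A d, x⟫_ℂ‖ := by rw [norm_mul, hnc]
      _ ≤ (m / 2) * numRadius A + ‖T‖ / 2 :=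
          add_le_add (mul_le_mul_of_nonneg_left (inner_le_numRadius A hx)
            (by positivity)) hAd
      _ = (1 / 2) * (‖T‖ + m * numRadius A) := by ring
  have hωA : numRadius A ≤ m := (numRadius_le_norm A).trans hnA
  have hωA0 : 0 ≤ numRadius A := numRadius_nonneg A
  constructor
  · refine numRadius_le T ?_ hmain
    positivity
  · have : m * numRadius A ≤ ‖T‖ := by
      calc m * numRadius A ≤ m * m := by gcongr
        _ = ‖T‖ := hmm
    linarith [norm_nonneg T]
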